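/- If a permutation class C contains, for every k, a monotone grid subclass whose cell graph is a path of length k (the long path property), then either C is the class of all permutations, or C contains for every k a monotone grid subclass whose cell graph is a proper-turning path of length k (a path in which no three consecutive vertices lie in the same row or column). -/

import Mathlib

/-- A monotone gridding matrix with `k` columns and `ℓ` rows (rows numbered bottom to
top): entry `none` is empty, `some true` is the class Inc, `some false` is Dec.
`M i j` is the entry in column `i`, row `j`. -/
abbrev GMatrix (k ℓ : ℕ) := Fin k → Fin ℓ → Option Bool

/-- The cell graph of a gridding matrix: the nonempty entries are the (effective)
vertices; two nonempty entries are adjacent if they share a row or a column and no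
nonempty entry lies strictly between them. -/
def cellGraph {k ℓ : ℕ} (M : GMatrix k ℓ) : SimpleGraph (Fin k × Fin ℓ) :=
  SimpleGraph.fromRel (fun x y =>
    M x.1 x.2 ≠ none ∧ M y.1 y.2 ≠ none ∧
    ((x.1 = y.1 ∧ x.2 < y.2 ∧ ∀ j, x.2 < j → j < y.2 → M x.1 j = none) ∨
     (x.2 = y.2 ∧ x.1 < y.1 ∧ ∀ i, x.1 < i → i < y.1 → M i x.2 = none)))
/-- The point at position `p` of the permutation `π` lies in the `(i,j)`-cell of the
gridding given by column boundaries `c` and row boundaries `r`. -/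
def InCell {n k ℓ : ℕ} (c : Fin (k + 1) → ℕ) (r : Fin (ℓ + 1) → ℕ)
    (π : Equiv.Perm (Fin n)) (p : Fin n) (i : Fin k) (j : Fin ℓ) : Prop :=
  c i.castSucc ≤ p.val ∧ p.val < c i.succ ∧
  r j.castSucc ≤ (π p).val ∧ (π p).val < r j.succ

/-- `(c, r)` is an `M`-gridding of the permutation `π`: every nonempty cell of the
gridding corresponds to a nonempty matrix entry, and the points in a cell with an
Inc (resp. Dec) entry form an increasing (resp. decreasing) pattern. -/
def IsGridding {n k ℓ : ℕ} (M : GMatrix k ℓ) (π : Equiv.Perm (Fin n))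
    (c : Fin (k + 1) → ℕ) (r : Fin (ℓ + 1) → ℕ) : Prop :=
  Monotone c ∧ Monotone r ∧ c 0 = 0 ∧ c (Fin.last k) = n ∧
  r 0 = 0 ∧ r (Fin.last ℓ) = n ∧
  ∀ (i : Fin k) (j : Fin ℓ),
    (∀ p, InCell c r π p i j → M i j ≠ none) ∧
    (M i j = some true → ∀ p q, InCell c r π p i j → InCell c r π q i j →
      p < q → π p < π q) ∧
    (M i j = some false → ∀ p q, InCell c r π p i j → InCell c r π q i j →
      p < q → π q < π p)

/-- The monotone grid class of `M`, at length `n`: permutations admitting an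
`M`-gridding. -/
def GridClass {k ℓ : ℕ} (M : GMatrix k ℓ) (n : ℕ) : Set (Equiv.Perm (Fin n)) :=
  {π | ∃ c r, IsGridding M π c r}
/-- The cell graph of `M` is a path of length `len`: the nonempty entries can be
enumerated as `v 0, …, v len` with adjacency exactly between consecutive entries. -/
def CellGraphIsPath {k ℓ : ℕ} (M : GMatrix k ℓ) (len : ℕ) : Prop :=
  ∃ v : Fin (len + 1) → Fin k × Fin ℓ,
    Function.Injective v ∧
    (∀ x : Fin k × Fin ℓ, M x.1 x.2 ≠ none ↔ ∃ t, v t = x) ∧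
    (∀ s t : Fin (len + 1),
      (cellGraph M).Adj (v s) (v t) ↔ (s.val + 1 = t.val ∨ t.val + 1 = s.val))

/-- The cell graph of `M` is a proper-turning path of length `len`: a path in which no
three vertices share a row or a column. -/
def CellGraphIsProperTurningPath {k ℓ : ℕ} (M : GMatrix k ℓ) (len : ℕ) : Prop :=
  ∃ v : Fin (len + 1) → Fin k × Fin ℓ,
    Function.Injective v ∧
    (∀ x : Fin k × Fin ℓ, M x.1 x.2 ≠ none ↔ ∃ t, v t = x) ∧
    (∀ s t : Fin (len + 1),
      (cellGraph M).Adj (v s) (v t) ↔ (s.val + 1 = t.val ∨ t.val + 1 = s.val)) ∧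
    (∀ s t u : Fin (len + 1), s ≠ t → t ≠ u → s ≠ u →
      ¬((v s).1 = (v t).1 ∧ (v t).1 = (v u).1) ∧
      ¬((v s).2 = (v t).2 ∧ (v t).2 = (v u).2))

/-- The long path property: for every `len`, the class `C` contains a monotone grid
subclass whose cell graph is a path of length `len`. -/
def LPP (C : (n : ℕ) → Set (Equiv.Perm (Fin n))) : Prop :=
  ∀ len : ℕ, ∃ (k ℓ : ℕ) (M : GMatrix k ℓ),
    (∀ n, GridClass M n ⊆ C n) ∧ CellGraphIsPath M len

-- test L1 L2 L3
open Finset in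
lemma mem_gridClass_of_row {k ℓ n : ℕ} (M : GMatrix k ℓ) (j : Fin ℓ)
    (x : Fin n → Fin k) (hx : StrictMono x) (hne : ∀ t, M (x t) j ≠ none)
    (π : Equiv.Perm (Fin n)) : π ∈ GridClass M n := by
  classical
  set c : Fin (k+1) → ℕ := fun i => #{t : Fin n | ((x t : ℕ)) < (i : ℕ)} with hcdef
  set r : Fin (ℓ+1) → ℕ := fun s => if (s:ℕ) ≤ (j:ℕ) then 0 else n with hrdef
  have hcmono : Monotone c := by
    intro a b hab
    apply Finset.card_le_card
    intro t ht
    simp only [Finset.mem_filter, Finset.mem_univ, true_and] at *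
    exact lt_of_lt_of_le ht hab
  have hcs : ∀ p : Fin n, c ((x p).castSucc) = p.val := by
    intro p
    have : ({t : Fin n | ((x t : ℕ)) < (((x p).castSucc : Fin (k+1)) : ℕ)} : Finset _) = Finset.Iio p := by
      ext t
      simp only [Finset.mem_filter, Finset.mem_univ, true_and, Finset.mem_Iio,
        Fin.coe_castSucc]
      rw [← Fin.lt_def, hx.lt_iff_lt]
    simp only [hcdef, this, Fin.card_Iio]
  have hcs' : ∀ p : Fin n, c ((x p).succ) = p.val + 1 := by
    intro p
    have : ({t : Fin n | ((x t : ℕ)) < (((x p).succ : Fin (k+1)) : ℕ)} : Finset _) = Finset.Iic p := by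
      ext t
      simp only [Finset.mem_filter, Finset.mem_univ, true_and, Finset.mem_Iic, Fin.val_succ]
      rw [Nat.lt_succ_iff, ← Fin.le_def, hx.le_iff_le]
    simp only [hcdef, this, Fin.card_Iic]
  have key : ∀ (i : Fin k) (j' : Fin ℓ) (p : Fin n), InCell c r π p i j' → i = x p ∧ j' = j := by
    intro i j' p hp
    obtain ⟨h1, h2, h3, h4⟩ := hp
    have hj : j' = j := by
      by_contra hne'
      rcases lt_or_gt_of_ne (Fin.val_ne_of_ne hne' : (j':ℕ) ≠ j) with h | h
      · have : r (j'.succ) = 0 := by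
          simp only [hrdef]; rw [if_pos]; simpa [Fin.val_succ, Nat.succ_le_iff] using h
        omega
      · have : r (j'.castSucc) = n := by
          simp only [hrdef]; rw [if_neg]; simpa [Fin.coe_castSucc] using h
        have := (π p).isLt
        omega
    refine ⟨?_, hj⟩
    by_contra hne'
    rcases lt_or_gt_of_ne (Fin.val_ne_of_ne hne' : (i:ℕ) ≠ (x p : ℕ)) with h | h
    · have : c i.succ ≤ c ((x p).castSucc) := by
        apply hcmono
        simp only [Fin.le_def, Fin.val_succ, Fin.coe_castSucc]; omega
      rw [hcs] at this; omega
    · have : c ((x p).succ) ≤ c (i.castSucc) := by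
        apply hcmono
        simp only [Fin.le_def, Fin.val_succ, Fin.coe_castSucc]; omega
      rw [hcs'] at this; omega
  refine ⟨c, r, hcmono, ?_, ?_, ?_, ?_, ?_, ?_⟩
  · intro a b hab
    have hab' : (a:ℕ) ≤ (b:ℕ) := hab
    simp only [hrdef]
    split_ifs <;> omega
  · simp [hcdef]
  · simp only [hcdef]
    have : ({t : Fin n | ((x t : ℕ)) < ((Fin.last k : Fin (k+1)) : ℕ)} : Finset _) = Finset.univ := by
      ext t
      simp [Fin.val_last, (x t).isLt]
    rw [this, Finset.card_univ, Fintype.card_fin]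
  · simp [hrdef]
  · simp only [hrdef]
    rw [if_neg]
    simpa using j.isLt
  · intro i j'
    refine ⟨?_, ?_, ?_⟩
    · intro p hp
      obtain ⟨hi, hj⟩ := key i j' p hp
      rw [hi, hj]; exact hne p
    · intro _ p q hp hq hpq
      obtain ⟨hi, _⟩ := key i j' p hp
      obtain ⟨hi', _⟩ := key i j' q hq
      exact absurd (hx.injective (hi ▸ hi')) (ne_of_lt hpq)
    · intro _ p q hp hq hpq
      obtain ⟨hi, _⟩ := key i j' p hp
      obtain ⟨hi', _⟩ := key i j' q hq
      exact absurd (hx.injective (hi ▸ hi')) (ne_of_lt hpq)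
open Finset

lemma mem_gridClass_of_col {k ℓ n : ℕ} (M : GMatrix k ℓ) (i₀ : Fin k)
    (y : Fin n → Fin ℓ) (hy : StrictMono y) (hne : ∀ t, M i₀ (y t) ≠ none)
    (π : Equiv.Perm (Fin n)) : π ∈ GridClass M n := by
  classical
  set c : Fin (k+1) → ℕ := fun s => if (s:ℕ) ≤ (i₀:ℕ) then 0 else n with hcdef
  set r : Fin (ℓ+1) → ℕ := fun s => #{t : Fin n | ((y t : ℕ)) < (s : ℕ)} with hrdef
  have hrmono : Monotone r := by
    intro a b hab
    apply Finset.card_le_card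
    intro t ht
    simp only [Finset.mem_filter, Finset.mem_univ, true_and] at *
    exact lt_of_lt_of_le ht hab
  have hrs : ∀ p : Fin n, r ((y p).castSucc) = p.val := by
    intro p
    have : ({t : Fin n | ((y t : ℕ)) < (((y p).castSucc : Fin (ℓ+1)) : ℕ)} : Finset _) = Finset.Iio p := by
      ext t
      simp only [Finset.mem_filter, Finset.mem_univ, true_and, Finset.mem_Iio,
        Fin.coe_castSucc]
      rw [← Fin.lt_def, hy.lt_iff_lt]
    simp only [hrdef, this, Fin.card_Iio]
  have hrs' : ∀ p : Fin n, r ((y p).succ) = p.val + 1 := by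
    intro p
    have : ({t : Fin n | ((y t : ℕ)) < (((y p).succ : Fin (ℓ+1)) : ℕ)} : Finset _) = Finset.Iic p := by
      ext t
      simp only [Finset.mem_filter, Finset.mem_univ, true_and, Finset.mem_Iic, Fin.val_succ]
      rw [Nat.lt_succ_iff, ← Fin.le_def, hy.le_iff_le]
    simp only [hrdef, this, Fin.card_Iic]
  have key : ∀ (i : Fin k) (j' : Fin ℓ) (p : Fin n), InCell c r π p i j' → i = i₀ ∧ j' = y (π p) := by
    intro i j' p hp
    obtain ⟨h1, h2, h3, h4⟩ := hp
    have hi : i = i₀ := by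
      by_contra hne'
      rcases lt_or_gt_of_ne (Fin.val_ne_of_ne hne' : (i:ℕ) ≠ (i₀:ℕ)) with h | h
      · have : c (i.succ) = 0 := by
          simp only [hcdef]; rw [if_pos]; simpa [Fin.val_succ, Nat.succ_le_iff] using h
        omega
      · have : c (i.castSucc) = n := by
          simp only [hcdef]; rw [if_neg]; simpa [Fin.coe_castSucc] using h
        have := p.isLt
        omega
    refine ⟨hi, ?_⟩
    by_contra hne'
    rcases lt_or_gt_of_ne (Fin.val_ne_of_ne hne' : (j':ℕ) ≠ (y (π p) : ℕ)) with h | h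
    · have : r j'.succ ≤ r ((y (π p)).castSucc) := by
        apply hrmono
        simp only [Fin.le_def, Fin.val_succ, Fin.coe_castSucc]; omega
      rw [hrs] at this; omega
    · have : r ((y (π p)).succ) ≤ r (j'.castSucc) := by
        apply hrmono
        simp only [Fin.le_def, Fin.val_succ, Fin.coe_castSucc]; omega
      rw [hrs'] at this; omega
  refine ⟨c, r, ?_, hrmono, ?_, ?_, ?_, ?_, ?_⟩
  · intro a b hab
    have hab' : (a:ℕ) ≤ (b:ℕ) := hab
    simp only [hcdef]
    split_ifs <;> omega
  · simp [hcdef]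
  · simp only [hcdef]
    rw [if_neg]
    simpa using i₀.isLt
  · simp [hrdef]
  · simp only [hrdef]
    have : ({t : Fin n | ((y t : ℕ)) < ((Fin.last ℓ : Fin (ℓ+1)) : ℕ)} : Finset _) = Finset.univ := by
      ext t
      simp [Fin.val_last, (y t).isLt]
    rw [this, Finset.card_univ, Fintype.card_fin]
  · intro i j'
    refine ⟨?_, ?_, ?_⟩
    · intro p hp
      obtain ⟨hi, hj⟩ := key i j' p hp
      rw [hi, hj]; exact hne (π p)
    · intro _ p q hp hq hpq
      obtain ⟨_, hj⟩ := key i j' p hp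
      obtain ⟨_, hj'⟩ := key i j' q hq
      have := π.injective (hy.injective (hj ▸ hj'))
      exact absurd this (ne_of_lt hpq)
    · intro _ p q hp hq hpq
      obtain ⟨_, hj⟩ := key i j' p hp
      obtain ⟨_, hj'⟩ := key i j' q hq
      have := π.injective (hy.injective (hj ▸ hj'))
      exact absurd this (ne_of_lt hpq)

lemma gridClass_mono {k ℓ : ℕ} (M M' : GMatrix k ℓ)
    (h : ∀ i j, M' i j ≠ none → M' i j = M i j) :
    ∀ n, GridClass M' n ⊆ GridClass M n := by
  intro n π hπ
  obtain ⟨c, r, mc, mr, c0, ck, r0, rl, hcell⟩ := hπ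
  refine ⟨c, r, mc, mr, c0, ck, r0, rl, ?_⟩
  intro i j
  have hne := (hcell i j).1
  refine ⟨?_, ?_, ?_⟩
  · intro p hp
    rw [← h i j (hne p hp)]
    exact hne p hp
  · intro hM p q hp hq hpq
    refine (hcell i j).2.1 ?_ p q hp hq hpq
    rw [h i j (hne p hp), hM]
  · intro hM p q hp hq hpq
    refine (hcell i j).2.2 ?_ p q hp hq hpq
    rw [h i j (hne p hp), hM]

section PathStruct

open Finset

variable {k ℓ T : ℕ} {M : GMatrix k ℓ} {v : Fin (T+1) → Fin k × Fin ℓ}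

lemma rowAdj (hinj : Function.Injective v)
    (himg : ∀ x : Fin k × Fin ℓ, M x.1 x.2 ≠ none ↔ ∃ t, v t = x)
    (hadj : ∀ s t, (cellGraph M).Adj (v s) (v t) ↔ (s.val + 1 = t.val ∨ t.val + 1 = s.val))
    (a b : Fin (T+1)) (hab : a ≠ b) (hrow : (v a).2 = (v b).2)
    (hemp : ∀ i : Fin k, min ((v a).1 : ℕ) ((v b).1 : ℕ) < (i:ℕ) →
      (i:ℕ) < max ((v a).1 : ℕ) ((v b).1 : ℕ) → M i (v a).2 = none) :
    (a:ℕ) + 1 = (b:ℕ) ∨ (b:ℕ) + 1 = (a:ℕ) := by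
  have hvne : v a ≠ v b := fun h => hab (hinj h)
  have hcne : (v a).1 ≠ (v b).1 := by
    intro h; exact hvne (Prod.ext h hrow)
  have hA : M (v a).1 (v a).2 ≠ none := (himg _).2 ⟨a, rfl⟩
  have hB : M (v b).1 (v b).2 ≠ none := (himg _).2 ⟨b, rfl⟩
  have hAdj : (cellGraph M).Adj (v a) (v b) := by
    rw [cellGraph, SimpleGraph.fromRel_adj]
    refine ⟨hvne, ?_⟩
    rcases lt_or_gt_of_ne hcne with h | h
    · have h' : ((v a).1 : ℕ) < ((v b).1 : ℕ) := h
      left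
      refine ⟨hA, hB, Or.inr ⟨hrow, h, ?_⟩⟩
      intro i h1 h2
      have h1' : ((v a).1 : ℕ) < (i:ℕ) := h1
      have h2' : (i:ℕ) < ((v b).1 : ℕ) := h2
      exact hemp i (by omega) (by omega)
    · have h' : ((v b).1 : ℕ) < ((v a).1 : ℕ) := h
      right
      refine ⟨hB, hA, Or.inr ⟨hrow.symm, h, ?_⟩⟩
      intro i h1 h2
      have h1' : ((v b).1 : ℕ) < (i:ℕ) := h1
      have h2' : (i:ℕ) < ((v a).1 : ℕ) := h2
      rw [← hrow]
      exact hemp i (by omega) (by omega)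
  exact (hadj a b).1 hAdj

lemma rowBase (hinj : Function.Injective v)
    (himg : ∀ x : Fin k × Fin ℓ, M x.1 x.2 ≠ none ↔ ∃ t, v t = x)
    (hadj : ∀ s t, (cellGraph M).Adj (v s) (v t) ↔ (s.val + 1 = t.val ∨ t.val + 1 = s.val))
    (a b : Fin (T+1)) (hrow : (v a).2 = (v b).2)
    (hcnt : #{i : Fin k | min ((v a).1:ℕ) ((v b).1:ℕ) < (i:ℕ) ∧
      (i:ℕ) < max ((v a).1:ℕ) ((v b).1:ℕ) ∧ M i (v a).2 ≠ none} = 0) :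
    ∀ s : Fin (T+1), min (a:ℕ) (b:ℕ) ≤ (s:ℕ) → (s:ℕ) ≤ max (a:ℕ) (b:ℕ) →
      (v s).2 = (v a).2 := by
  intro s hs1 hs2
  rcases eq_or_ne a b with rfl | hab
  · have : (s:ℕ) = (a:ℕ) := by omega
    rw [Fin.ext this]
  · have hemp : ∀ i : Fin k, min ((v a).1 : ℕ) ((v b).1 : ℕ) < (i:ℕ) →
        (i:ℕ) < max ((v a).1 : ℕ) ((v b).1 : ℕ) → M i (v a).2 = none := by
      intro i h1 h2
      by_contra hne
      have : i ∈ ({i : Fin k | min ((v a).1:ℕ) ((v b).1:ℕ) < (i:ℕ) ∧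
          (i:ℕ) < max ((v a).1:ℕ) ((v b).1:ℕ) ∧ M i (v a).2 ≠ none} : Finset _) := by
        simp only [Finset.mem_filter, Finset.mem_univ, true_and]
        exact ⟨h1, h2, hne⟩
      rw [Finset.card_eq_zero, Finset.eq_empty_iff_forall_notMem] at hcnt
      exact hcnt i this
    rcases rowAdj hinj himg hadj a b hab hrow hemp with h | h
    · have : (s:ℕ) = (a:ℕ) ∨ (s:ℕ) = (b:ℕ) := by omega
      rcases this with h' | h'
      · rw [Fin.ext h']
      · rw [Fin.ext h', hrow]
    · have : (s:ℕ) = (a:ℕ) ∨ (s:ℕ) = (b:ℕ) := by omega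
      rcases this with h' | h'
      · rw [Fin.ext h']
      · rw [Fin.ext h', hrow]

lemma rowContig (hinj : Function.Injective v)
    (himg : ∀ x : Fin k × Fin ℓ, M x.1 x.2 ≠ none ↔ ∃ t, v t = x)
    (hadj : ∀ s t, (cellGraph M).Adj (v s) (v t) ↔ (s.val + 1 = t.val ∨ t.val + 1 = s.val)) :
    ∀ (n : ℕ) (a b : Fin (T+1)), (v a).2 = (v b).2 →
    #{i : Fin k | min ((v a).1:ℕ) ((v b).1:ℕ) < (i:ℕ) ∧
      (i:ℕ) < max ((v a).1:ℕ) ((v b).1:ℕ) ∧ M i (v a).2 ≠ none} ≤ n →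
    ∀ s : Fin (T+1), min (a:ℕ) (b:ℕ) ≤ (s:ℕ) → (s:ℕ) ≤ max (a:ℕ) (b:ℕ) →
      (v s).2 = (v a).2 := by
  intro n
  induction n with
  | zero =>
    intro a b hrow hcnt
    exact rowBase hinj himg hadj a b hrow (Nat.le_zero.mp hcnt)
  | succ n ih =>
    intro a b hrow hcnt
    by_cases hc0 : #{i : Fin k | min ((v a).1:ℕ) ((v b).1:ℕ) < (i:ℕ) ∧
        (i:ℕ) < max ((v a).1:ℕ) ((v b).1:ℕ) ∧ M i (v a).2 ≠ none} = 0
    · exact rowBase hinj himg hadj a b hrow hc0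
    · obtain ⟨i₀, hi₀⟩ := Finset.card_pos.mp (Nat.pos_of_ne_zero hc0)
      simp only [Finset.mem_filter, Finset.mem_univ, true_and] at hi₀
      obtain ⟨h1, h2, h3⟩ := hi₀
      obtain ⟨cp, hcp⟩ := (himg (i₀, (v a).2)).1 h3
      have hrowc : (v cp).2 = (v a).2 := by rw [hcp]
      have hcolc : ((v cp).1 : ℕ) = (i₀ : ℕ) := by rw [hcp]
      have hi₀mem : i₀ ∈ ({i : Fin k | min ((v a).1:ℕ) ((v b).1:ℕ) < (i:ℕ) ∧
          (i:ℕ) < max ((v a).1:ℕ) ((v b).1:ℕ) ∧ M i (v a).2 ≠ none} : Finset _) := by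
        simp only [Finset.mem_filter, Finset.mem_univ, true_and]
        exact ⟨h1, h2, h3⟩
      have hsub : ∀ x y : Fin (T+1), (v x).2 = (v a).2 →
          min ((v a).1:ℕ) ((v b).1:ℕ) ≤ min ((v x).1:ℕ) ((v y).1:ℕ) →
          max ((v x).1:ℕ) ((v y).1:ℕ) ≤ max ((v a).1:ℕ) ((v b).1:ℕ) →
          (min ((v x).1:ℕ) ((v y).1:ℕ) = (i₀:ℕ) ∨ max ((v x).1:ℕ) ((v y).1:ℕ) = (i₀:ℕ)) →
          ({i : Fin k | min ((v x).1:ℕ) ((v y).1:ℕ) < (i:ℕ) ∧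
            (i:ℕ) < max ((v x).1:ℕ) ((v y).1:ℕ) ∧ M i (v x).2 ≠ none} : Finset _) ⊆
          ({i : Fin k | min ((v a).1:ℕ) ((v b).1:ℕ) < (i:ℕ) ∧
            (i:ℕ) < max ((v a).1:ℕ) ((v b).1:ℕ) ∧ M i (v a).2 ≠ none} : Finset _).erase i₀ := by
        intro x y hxr hmin hmax hend i hi
        simp only [Finset.mem_filter, Finset.mem_univ, true_and] at hi
        obtain ⟨g1, g2, g3⟩ := hi
        rw [hxr] at g3
        rw [Finset.mem_erase]
        simp only [Finset.mem_filter, Finset.mem_univ, true_and]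
        refine ⟨?_, by omega, by omega, g3⟩
        intro heq
        rw [heq] at g1 g2
        omega
      have hcard : ∀ s' : Finset (Fin k),
          s' ⊆ ({i : Fin k | min ((v a).1:ℕ) ((v b).1:ℕ) < (i:ℕ) ∧
            (i:ℕ) < max ((v a).1:ℕ) ((v b).1:ℕ) ∧ M i (v a).2 ≠ none} : Finset _).erase i₀ →
          s'.card ≤ n := by
        intro s' hs'
        have := Finset.card_le_card hs'
        rw [Finset.card_erase_of_mem hi₀mem] at this
        omega
      have ih1 : ∀ s : Fin (T+1), min (a:ℕ) (cp:ℕ) ≤ (s:ℕ) → (s:ℕ) ≤ max (a:ℕ) (cp:ℕ) →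
          (v s).2 = (v a).2 := by
        apply ih a cp hrowc.symm
        apply hcard
        apply hsub a cp rfl (by omega) (by omega) (by omega)
      have ih2 : ∀ s : Fin (T+1), min (cp:ℕ) (b:ℕ) ≤ (s:ℕ) → (s:ℕ) ≤ max (cp:ℕ) (b:ℕ) →
          (v s).2 = (v cp).2 := by
        apply ih cp b (hrowc.trans hrow)
        exact hcard _ (hsub cp b hrowc (by omega) (by omega) (by omega))
      intro s hs1 hs2
      by_cases hcase : min (a:ℕ) (cp:ℕ) ≤ (s:ℕ) ∧ (s:ℕ) ≤ max (a:ℕ) (cp:ℕ)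
      · exact ih1 s hcase.1 hcase.2
      · have hc2 : min (cp:ℕ) (b:ℕ) ≤ (s:ℕ) ∧ (s:ℕ) ≤ max (cp:ℕ) (b:ℕ) := by omega
        exact (ih2 s hc2.1 hc2.2).trans hrowc

end PathStruct

section PathStruct2

open Finset

variable {k ℓ T : ℕ} {M : GMatrix k ℓ} {v : Fin (T+1) → Fin k × Fin ℓ}

lemma colAdj (hinj : Function.Injective v)
    (himg : ∀ x : Fin k × Fin ℓ, M x.1 x.2 ≠ none ↔ ∃ t, v t = x)
    (hadj : ∀ s t, (cellGraph M).Adj (v s) (v t) ↔ (s.val + 1 = t.val ∨ t.val + 1 = s.val))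
    (a b : Fin (T+1)) (hab : a ≠ b) (hcol : (v a).1 = (v b).1)
    (hemp : ∀ j : Fin ℓ, min ((v a).2 : ℕ) ((v b).2 : ℕ) < (j:ℕ) →
      (j:ℕ) < max ((v a).2 : ℕ) ((v b).2 : ℕ) → M (v a).1 j = none) :
    (a:ℕ) + 1 = (b:ℕ) ∨ (b:ℕ) + 1 = (a:ℕ) := by
  have hvne : v a ≠ v b := fun h => hab (hinj h)
  have hrne : (v a).2 ≠ (v b).2 := by
    intro h; exact hvne (Prod.ext hcol h)
  have hA : M (v a).1 (v a).2 ≠ none := (himg _).2 ⟨a, rfl⟩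
  have hB : M (v b).1 (v b).2 ≠ none := (himg _).2 ⟨b, rfl⟩
  have hAdj : (cellGraph M).Adj (v a) (v b) := by
    rw [cellGraph, SimpleGraph.fromRel_adj]
    refine ⟨hvne, ?_⟩
    rcases lt_or_gt_of_ne hrne with h | h
    · have h' : ((v a).2 : ℕ) < ((v b).2 : ℕ) := h
      left
      refine ⟨hA, hB, Or.inl ⟨hcol, h, ?_⟩⟩
      intro j h1 h2
      have h1' : ((v a).2 : ℕ) < (j:ℕ) := h1
      have h2' : (j:ℕ) < ((v b).2 : ℕ) := h2
      exact hemp j (by omega) (by omega)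
    · have h' : ((v b).2 : ℕ) < ((v a).2 : ℕ) := h
      right
      refine ⟨hB, hA, Or.inl ⟨hcol.symm, h, ?_⟩⟩
      intro j h1 h2
      have h1' : ((v b).2 : ℕ) < (j:ℕ) := h1
      have h2' : (j:ℕ) < ((v a).2 : ℕ) := h2
      rw [← hcol]
      exact hemp j (by omega) (by omega)
  exact (hadj a b).1 hAdj

lemma colBase (hinj : Function.Injective v)
    (himg : ∀ x : Fin k × Fin ℓ, M x.1 x.2 ≠ none ↔ ∃ t, v t = x)
    (hadj : ∀ s t, (cellGraph M).Adj (v s) (v t) ↔ (s.val + 1 = t.val ∨ t.val + 1 = s.val))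
    (a b : Fin (T+1)) (hcol : (v a).1 = (v b).1)
    (hcnt : #{j : Fin ℓ | min ((v a).2:ℕ) ((v b).2:ℕ) < (j:ℕ) ∧
      (j:ℕ) < max ((v a).2:ℕ) ((v b).2:ℕ) ∧ M (v a).1 j ≠ none} = 0) :
    ∀ s : Fin (T+1), min (a:ℕ) (b:ℕ) ≤ (s:ℕ) → (s:ℕ) ≤ max (a:ℕ) (b:ℕ) →
      (v s).1 = (v a).1 := by
  intro s hs1 hs2
  rcases eq_or_ne a b with rfl | hab
  · have : (s:ℕ) = (a:ℕ) := by omega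
    rw [Fin.ext this]
  · have hemp : ∀ j : Fin ℓ, min ((v a).2 : ℕ) ((v b).2 : ℕ) < (j:ℕ) →
        (j:ℕ) < max ((v a).2 : ℕ) ((v b).2 : ℕ) → M (v a).1 j = none := by
      intro j h1 h2
      by_contra hne
      have : j ∈ ({j : Fin ℓ | min ((v a).2:ℕ) ((v b).2:ℕ) < (j:ℕ) ∧
          (j:ℕ) < max ((v a).2:ℕ) ((v b).2:ℕ) ∧ M (v a).1 j ≠ none} : Finset _) := by
        simp only [Finset.mem_filter, Finset.mem_univ, true_and]
        exact ⟨h1, h2, hne⟩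
      rw [Finset.card_eq_zero, Finset.eq_empty_iff_forall_notMem] at hcnt
      exact hcnt j this
    rcases colAdj hinj himg hadj a b hab hcol hemp with h | h
    · have : (s:ℕ) = (a:ℕ) ∨ (s:ℕ) = (b:ℕ) := by omega
      rcases this with h' | h'
      · rw [Fin.ext h']
      · rw [Fin.ext h', hcol]
    · have : (s:ℕ) = (a:ℕ) ∨ (s:ℕ) = (b:ℕ) := by omega
      rcases this with h' | h'
      · rw [Fin.ext h']
      · rw [Fin.ext h', hcol]

lemma colContig (hinj : Function.Injective v)
    (himg : ∀ x : Fin k × Fin ℓ, M x.1 x.2 ≠ none ↔ ∃ t, v t = x)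
    (hadj : ∀ s t, (cellGraph M).Adj (v s) (v t) ↔ (s.val + 1 = t.val ∨ t.val + 1 = s.val)) :
    ∀ (n : ℕ) (a b : Fin (T+1)), (v a).1 = (v b).1 →
    #{j : Fin ℓ | min ((v a).2:ℕ) ((v b).2:ℕ) < (j:ℕ) ∧
      (j:ℕ) < max ((v a).2:ℕ) ((v b).2:ℕ) ∧ M (v a).1 j ≠ none} ≤ n →
    ∀ s : Fin (T+1), min (a:ℕ) (b:ℕ) ≤ (s:ℕ) → (s:ℕ) ≤ max (a:ℕ) (b:ℕ) →
      (v s).1 = (v a).1 := by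
  intro n
  induction n with
  | zero =>
    intro a b hcol hcnt
    exact colBase hinj himg hadj a b hcol (Nat.le_zero.mp hcnt)
  | succ n ih =>
    intro a b hcol hcnt
    by_cases hc0 : #{j : Fin ℓ | min ((v a).2:ℕ) ((v b).2:ℕ) < (j:ℕ) ∧
        (j:ℕ) < max ((v a).2:ℕ) ((v b).2:ℕ) ∧ M (v a).1 j ≠ none} = 0
    · exact colBase hinj himg hadj a b hcol hc0
    · obtain ⟨j₀, hj₀⟩ := Finset.card_pos.mp (Nat.pos_of_ne_zero hc0)
      simp only [Finset.mem_filter, Finset.mem_univ, true_and] at hj₀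
      obtain ⟨h1, h2, h3⟩ := hj₀
      obtain ⟨cp, hcp⟩ := (himg ((v a).1, j₀)).1 h3
      have hcolc : (v cp).1 = (v a).1 := by rw [hcp]
      have hrowc : ((v cp).2 : ℕ) = (j₀ : ℕ) := by rw [hcp]
      have hj₀mem : j₀ ∈ ({j : Fin ℓ | min ((v a).2:ℕ) ((v b).2:ℕ) < (j:ℕ) ∧
          (j:ℕ) < max ((v a).2:ℕ) ((v b).2:ℕ) ∧ M (v a).1 j ≠ none} : Finset _) := by
        simp only [Finset.mem_filter, Finset.mem_univ, true_and]
        exact ⟨h1, h2, h3⟩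
      have hsub : ∀ x y : Fin (T+1), (v x).1 = (v a).1 →
          min ((v a).2:ℕ) ((v b).2:ℕ) ≤ min ((v x).2:ℕ) ((v y).2:ℕ) →
          max ((v x).2:ℕ) ((v y).2:ℕ) ≤ max ((v a).2:ℕ) ((v b).2:ℕ) →
          (min ((v x).2:ℕ) ((v y).2:ℕ) = (j₀:ℕ) ∨ max ((v x).2:ℕ) ((v y).2:ℕ) = (j₀:ℕ)) →
          ({j : Fin ℓ | min ((v x).2:ℕ) ((v y).2:ℕ) < (j:ℕ) ∧
            (j:ℕ) < max ((v x).2:ℕ) ((v y).2:ℕ) ∧ M (v x).1 j ≠ none} : Finset _) ⊆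
          ({j : Fin ℓ | min ((v a).2:ℕ) ((v b).2:ℕ) < (j:ℕ) ∧
            (j:ℕ) < max ((v a).2:ℕ) ((v b).2:ℕ) ∧ M (v a).1 j ≠ none} : Finset _).erase j₀ := by
        intro x y hxc hmin hmax hend j hj
        simp only [Finset.mem_filter, Finset.mem_univ, true_and] at hj
        obtain ⟨g1, g2, g3⟩ := hj
        rw [hxc] at g3
        rw [Finset.mem_erase]
        simp only [Finset.mem_filter, Finset.mem_univ, true_and]
        refine ⟨?_, by omega, by omega, g3⟩
        intro heq
        rw [heq] at g1 g2
        omega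
      have hcard : ∀ s' : Finset (Fin ℓ),
          s' ⊆ ({j : Fin ℓ | min ((v a).2:ℕ) ((v b).2:ℕ) < (j:ℕ) ∧
            (j:ℕ) < max ((v a).2:ℕ) ((v b).2:ℕ) ∧ M (v a).1 j ≠ none} : Finset _).erase j₀ →
          s'.card ≤ n := by
        intro s' hs'
        have := Finset.card_le_card hs'
        rw [Finset.card_erase_of_mem hj₀mem] at this
        omega
      have ih1 : ∀ s : Fin (T+1), min (a:ℕ) (cp:ℕ) ≤ (s:ℕ) → (s:ℕ) ≤ max (a:ℕ) (cp:ℕ) →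
          (v s).1 = (v a).1 := by
        apply ih a cp hcolc.symm
        apply hcard
        apply hsub a cp rfl (by omega) (by omega) (by omega)
      have ih2 : ∀ s : Fin (T+1), min (cp:ℕ) (b:ℕ) ≤ (s:ℕ) → (s:ℕ) ≤ max (cp:ℕ) (b:ℕ) →
          (v s).1 = (v cp).1 := by
        apply ih cp b (hcolc.trans hcol)
        exact hcard _ (hsub cp b hcolc (by omega) (by omega) (by omega))
      intro s hs1 hs2
      by_cases hcase : min (a:ℕ) (cp:ℕ) ≤ (s:ℕ) ∧ (s:ℕ) ≤ max (a:ℕ) (cp:ℕ)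
      · exact ih1 s hcase.1 hcase.2
      · have hc2 : min (cp:ℕ) (b:ℕ) ≤ (s:ℕ) ∧ (s:ℕ) ≤ max (cp:ℕ) (b:ℕ) := by omega
        exact (ih2 s hc2.1 hc2.2).trans hcolc

end PathStruct2

section Extract

open Finset

lemma adj_share {k ℓ : ℕ} {M : GMatrix k ℓ} {x y : Fin k × Fin ℓ}
    (h : (cellGraph M).Adj x y) : (y.2 = x.2 ∨ y.1 = x.1) := by
  rw [cellGraph, SimpleGraph.fromRel_adj] at h
  rcases h.2 with ⟨_, _, hc | hc⟩ | ⟨_, _, hc | hc⟩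
  · exact Or.inr hc.1.symm
  · exact Or.inl hc.1.symm
  · exact Or.inr hc.1
  · exact Or.inl hc.1

lemma extract_proper {k ℓ B len T : ℕ} (M : GMatrix k ℓ) (hB : 2 ≤ B)
    (hTlen : len * (B - 1) ≤ T)
    (hrowB : ∀ j : Fin ℓ, #{i : Fin k | M i j ≠ none} ≤ B)
    (hcolB : ∀ i : Fin k, #{j : Fin ℓ | M i j ≠ none} ≤ B)
    (v : Fin (T+1) → Fin k × Fin ℓ) (hinj : Function.Injective v)
    (himg : ∀ x : Fin k × Fin ℓ, M x.1 x.2 ≠ none ↔ ∃ t, v t = x)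
    (hadj : ∀ s t, (cellGraph M).Adj (v s) (v t) ↔ (s.val + 1 = t.val ∨ t.val + 1 = s.val)) :
    ∃ M' : GMatrix k ℓ, (∀ i j, M' i j ≠ none → M' i j = M i j) ∧
      CellGraphIsProperTurningPath M' len := by
  classical
  have hm : 1 ≤ B - 1 := by omega
  -- the collinearity predicate
  set Collin : Fin (T+1) → Fin (T+1) → Prop := fun a e =>
    (a:ℕ) ≤ (e:ℕ) ∧
    ((∀ s : Fin (T+1), (a:ℕ) ≤ (s:ℕ) → (s:ℕ) ≤ (e:ℕ) → (v s).2 = (v a).2) ∨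
     (∀ s : Fin (T+1), (a:ℕ) ≤ (s:ℕ) → (s:ℕ) ≤ (e:ℕ) → (v s).1 = (v a).1)) with hColdef
  have hCself : ∀ a, Collin a a := by
    intro a
    refine ⟨le_refl _, Or.inl ?_⟩
    intro s h1 h2
    rw [Fin.ext (le_antisymm h2 h1 : (s:ℕ) = (a:ℕ))]
  set g : Fin (T+1) → Fin (T+1) := fun p =>
    (Finset.univ.filter (Collin p)).max' ⟨p, by simp only [Finset.mem_filter, Finset.mem_univ, true_and]; exact hCself p⟩ with hgdef
  have hgmem : ∀ p, Collin p (g p) := by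
    intro p
    have := Finset.max'_mem (Finset.univ.filter (Collin p)) ⟨p, by simp only [Finset.mem_filter, Finset.mem_univ, true_and]; exact hCself p⟩
    simpa using this
  have hgle : ∀ p e, Collin p e → e ≤ g p := by
    intro p e he
    apply Finset.le_max'
    simpa using he
  set f : ℕ → Fin (T+1) := fun i => g^[i] 0 with hfdef
  have hfs : ∀ i, f (i+1) = g (f i) := fun i => Function.iterate_succ_apply' g i 0
  have hg_lt : ∀ p : Fin (T+1), (p:ℕ) < T → (p:ℕ) < (g p : ℕ) := by
    intro p hp
    set e : Fin (T+1) := ⟨(p:ℕ)+1, by omega⟩ with hedef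
    have hAdj : (cellGraph M).Adj (v p) (v e) := (hadj p e).2 (Or.inl rfl)
    have hwin : ∀ s : Fin (T+1), (p:ℕ) ≤ (s:ℕ) → (s:ℕ) ≤ (e:ℕ) → s = p ∨ s = e := by
      intro s h1 h2
      have : (s:ℕ) = (p:ℕ) ∨ (s:ℕ) = (e:ℕ) := by
        simp only [hedef] at h2 ⊢; omega
      rcases this with h | h
      · exact Or.inl (Fin.ext h)
      · exact Or.inr (Fin.ext h)
    have hCol : Collin p e := by
      refine ⟨by simp [hedef], ?_⟩
      rcases adj_share hAdj with h | h
      · left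
        intro s h1 h2
        rcases hwin s h1 h2 with rfl | rfl
        · rfl
        · exact h
      · right
        intro s h1 h2
        rcases hwin s h1 h2 with rfl | rfl
        · rfl
        · exact h
    have := hgle p e hCol
    have : (e:ℕ) ≤ (g p : ℕ) := this
    simp only [hedef] at this
    omega
  have hg_step : ∀ p : Fin (T+1), (g p : ℕ) ≤ (p:ℕ) + (B - 1) := by
    intro p
    obtain ⟨hle, hcase⟩ := hgmem p
    have hIcc : (Finset.Icc p (g p)).card ≤ B := by
      rcases hcase with h | h
      · refine le_trans (Finset.card_le_card_of_injOn (fun s => (v s).1)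
          (t := {i : Fin k | M i (v p).2 ≠ none}) ?_ ?_) (hrowB ((v p).2))
        · intro s hs
          rw [Finset.mem_coe, Finset.mem_Icc] at hs
          have hrow : (v s).2 = (v p).2 := h s hs.1 hs.2
          simp only [Finset.mem_coe, Finset.mem_filter, Finset.mem_univ, true_and]
          rw [← hrow]
          exact (himg _).2 ⟨s, rfl⟩
        · intro s hs s' hs' heq
          rw [Finset.coe_Icc, Set.mem_Icc] at hs hs'
          apply hinj
          apply Prod.ext heq
          rw [h s hs.1 hs.2, h s' hs'.1 hs'.2]
      · refine le_trans (Finset.card_le_card_of_injOn (fun s => (v s).2)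
          (t := {j : Fin ℓ | M (v p).1 j ≠ none}) ?_ ?_) (hcolB ((v p).1))
        · intro s hs
          rw [Finset.mem_coe, Finset.mem_Icc] at hs
          have hcol : (v s).1 = (v p).1 := h s hs.1 hs.2
          simp only [Finset.mem_coe, Finset.mem_filter, Finset.mem_univ, true_and]
          rw [← hcol]
          exact (himg _).2 ⟨s, rfl⟩
        · intro s hs s' hs' heq
          rw [Finset.coe_Icc, Set.mem_Icc] at hs hs'
          apply hinj
          apply Prod.ext _ heq
          rw [h s hs.1 hs.2, h s' hs'.1 hs'.2]
    rw [Fin.card_Icc] at hIcc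
    omega
  have hg_ge : ∀ p : Fin (T+1), (p:ℕ) ≤ (g p : ℕ) := fun p => (hgmem p).1
  have hf_le : ∀ i, (f i : ℕ) ≤ i * (B-1) := by
    intro i
    induction i with
    | zero => simp [hfdef]
    | succ i ih =>
      rw [hfs]
      have h1 := hg_step (f i)
      have h2 : (i+1) * (B-1) = i * (B-1) + (B-1) := Nat.succ_mul i (B-1)
      omega
  have hf_lt_T : ∀ i, i < len → (f i : ℕ) < T := by
    intro i hi
    have h1 := hf_le i
    have h2 : i * (B-1) ≤ (len - 1) * (B-1) := Nat.mul_le_mul_right _ (by omega)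
    have h3 : (len - 1) * (B-1) + (B-1) = len * (B-1) := by
      rcases Nat.exists_eq_add_of_lt hi with ⟨c, rfl⟩
      simp only [Nat.add_sub_cancel]
      rw [← Nat.succ_mul]
    omega
  have hf_mono : ∀ j i, i ≤ j → (f i : ℕ) ≤ (f j : ℕ) := by
    intro j
    induction j with
    | zero => intro i hij; rw [Nat.le_zero.mp hij]
    | succ j ih =>
      intro i hij
      rcases Nat.eq_or_lt_of_le hij with rfl | h
      · rfl
      · refine le_trans (ih i (by omega)) ?_
        rw [hfs]
        exact hg_ge (f j)
  have hf_strict : ∀ i j, i < j → j ≤ len → (f i : ℕ) < (f j : ℕ) := by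
    intro i j hij hjlen
    have h1 : (f i : ℕ) < (f (i+1) : ℕ) := by
      rw [hfs]
      exact hg_lt (f i) (hf_lt_T i (by omega))
    exact lt_of_lt_of_le h1 (hf_mono j (i+1) (by omega))
  have key_row : ∀ s t : ℕ, s < t → t ≤ len → (v (f s)).2 = (v (f t)).2 → t = s + 1 := by
    intro s t hst htl hrow
    by_contra hne
    have hst2 : s + 2 ≤ t := by omega
    have hlt : (f s : ℕ) < (f t : ℕ) := hf_strict s t hst htl
    have hcontig := rowContig hinj himg hadj
      (#{i : Fin k | min ((v (f s)).1:ℕ) ((v (f t)).1:ℕ) < (i:ℕ) ∧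
        (i:ℕ) < max ((v (f s)).1:ℕ) ((v (f t)).1:ℕ) ∧ M i (v (f s)).2 ≠ none})
      (f s) (f t) hrow le_rfl
    have hlt1 : (f (s+1) : ℕ) < (f t : ℕ) := hf_strict (s+1) t (by omega) htl
    have hle1 : (f s : ℕ) ≤ (f (s+1) : ℕ) := hf_mono (s+1) s (by omega)
    set e : Fin (T+1) := ⟨(f (s+1) : ℕ) + 1, by have := (f t).isLt; omega⟩ with hedef
    have hCol : Collin (f s) e := by
      refine ⟨?_, Or.inl ?_⟩
      · simp only [hedef]; omega
      · intro s' h1 h2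
        simp only [hedef] at h2
        exact hcontig s' (by omega) (by omega)
    have h2 : (e : ℕ) ≤ (g (f s) : ℕ) := hgle (f s) e hCol
    rw [← hfs] at h2
    simp only [hedef] at h2
    omega
  have key_col : ∀ s t : ℕ, s < t → t ≤ len → (v (f s)).1 = (v (f t)).1 → t = s + 1 := by
    intro s t hst htl hcol
    by_contra hne
    have hst2 : s + 2 ≤ t := by omega
    have hlt : (f s : ℕ) < (f t : ℕ) := hf_strict s t hst htl
    have hcontig := colContig hinj himg hadj
      (#{j : Fin ℓ | min ((v (f s)).2:ℕ) ((v (f t)).2:ℕ) < (j:ℕ) ∧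
        (j:ℕ) < max ((v (f s)).2:ℕ) ((v (f t)).2:ℕ) ∧ M (v (f s)).1 j ≠ none})
      (f s) (f t) hcol le_rfl
    have hlt1 : (f (s+1) : ℕ) < (f t : ℕ) := hf_strict (s+1) t (by omega) htl
    have hle1 : (f s : ℕ) ≤ (f (s+1) : ℕ) := hf_mono (s+1) s (by omega)
    set e : Fin (T+1) := ⟨(f (s+1) : ℕ) + 1, by have := (f t).isLt; omega⟩ with hedef
    have hCol : Collin (f s) e := by
      refine ⟨?_, Or.inr ?_⟩
      · simp only [hedef]; omega
      · intro s' h1 h2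
        simp only [hedef] at h2
        exact hcontig s' (by omega) (by omega)
    have h2 : (e : ℕ) ≤ (g (f s) : ℕ) := hgle (f s) e hCol
    rw [← hfs] at h2
    simp only [hedef] at h2
    omega
  set w : Fin (len+1) → Fin k × Fin ℓ := fun t => v (f t.val) with hwdef
  have row3 : ∀ s t : Fin (len+1), (w s).2 = (w t).2 →
      s.val = t.val ∨ s.val + 1 = t.val ∨ t.val + 1 = s.val := by
    intro s t h
    rcases Nat.lt_trichotomy s.val t.val with hlt | heq | hgt
    · have := key_row s.val t.val hlt (Nat.lt_succ_iff.mp t.isLt) h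
      omega
    · exact Or.inl heq
    · have := key_row t.val s.val hgt (Nat.lt_succ_iff.mp s.isLt) h.symm
      omega
  have col3 : ∀ s t : Fin (len+1), (w s).1 = (w t).1 →
      s.val = t.val ∨ s.val + 1 = t.val ∨ t.val + 1 = s.val := by
    intro s t h
    rcases Nat.lt_trichotomy s.val t.val with hlt | heq | hgt
    · have := key_col s.val t.val hlt (Nat.lt_succ_iff.mp t.isLt) h
      omega
    · exact Or.inl heq
    · have := key_col t.val s.val hgt (Nat.lt_succ_iff.mp s.isLt) h.symm
      omega
  have hwinj : Function.Injective w := by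
    intro s t h
    have h2 : f s.val = f t.val := hinj h
    apply Fin.ext
    rcases Nat.lt_trichotomy s.val t.val with hlt | heq | hgt
    · have := hf_strict s.val t.val hlt (Nat.lt_succ_iff.mp t.isLt)
      rw [h2] at this
      omega
    · exact heq
    · have := hf_strict t.val s.val hgt (Nat.lt_succ_iff.mp s.isLt)
      rw [h2] at this
      omega
  set M' : GMatrix k ℓ := fun i j => if (∃ t : Fin (len+1), w t = (i, j)) then M i j else none
    with hM'def
  have hsubM : ∀ i j, M' i j ≠ none → M' i j = M i j := by
    intro i j h
    by_cases hc : (∃ t : Fin (len+1), w t = (i, j))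
    · simp only [hM'def, if_pos hc]
    · exact absurd (by simp only [hM'def, if_neg hc]) h
  have himg' : ∀ x : Fin k × Fin ℓ, M' x.1 x.2 ≠ none ↔ ∃ t, w t = x := by
    intro x
    constructor
    · intro h
      by_contra hc
      exact h (by simp only [hM'def]; rw [if_neg hc])
    · rintro ⟨t, rfl⟩
      have hMne : M (w t).1 (w t).2 ≠ none := (himg _).2 ⟨f t.val, rfl⟩
      have : M' (w t).1 (w t).2 = M (w t).1 (w t).2 := by
        simp only [hM'def]
        rw [if_pos ⟨t, rfl⟩]
      rw [this]
      exact hMne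
  have hwne' : ∀ t : Fin (len+1), M' (w t).1 (w t).2 ≠ none := fun t => (himg' (w t)).2 ⟨t, rfl⟩
  have hcons : ∀ s t : Fin (len+1), s.val + 1 = t.val → (cellGraph M').Adj (w s) (w t) := by
    intro s t hst
    have htlen : t.val ≤ len := Nat.lt_succ_iff.mp t.isLt
    have hlt : (f s.val : ℕ) < (f t.val : ℕ) := hf_strict _ _ (by omega) htlen
    have hwne : w s ≠ w t := by
      intro h
      have h2 := hinj h
      rw [h2] at hlt
      exact lt_irrefl _ hlt
    have hft : f t.val = g (f s.val) := by
      have : t.val = s.val + 1 := hst.symm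
      rw [this]
      exact hfs s.val
    have hCol := hgmem (f s.val)
    rw [← hft] at hCol
    rw [cellGraph, SimpleGraph.fromRel_adj]
    refine ⟨hwne, ?_⟩
    rcases hCol.2 with hrow | hcol
    · -- shared row
      have hr : (w t).2 = (w s).2 := hrow (f t.val) (le_of_lt hlt) le_rfl
      have hcne : (w s).1 ≠ (w t).1 := fun h => hwne (Prod.ext h hr.symm)
      have hmid : ∀ i : Fin k, min ((w s).1 : ℕ) ((w t).1 : ℕ) < (i:ℕ) →
          (i:ℕ) < max ((w s).1 : ℕ) ((w t).1 : ℕ) → M' i (w s).2 = none := by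
        intro i h1 h2
        by_contra hne2
        obtain ⟨t', ht'⟩ := (himg' (i, (w s).2)).1 hne2
        have hrow' : (w t').2 = (w s).2 := by rw [ht']
        have hcol' : ((w t').1 : ℕ) = (i : ℕ) := by rw [ht']
        have hts : t'.val ≠ s.val := by
          intro hh
          rw [Fin.ext hh] at hcol'
          omega
        have htt : t'.val ≠ t.val := by
          intro hh
          rw [Fin.ext hh] at hcol'
          omega
        have r1 := row3 s t' hrow'.symm
        have r2 := row3 t t' (hr.trans hrow'.symm)
        omega
      rcases lt_or_gt_of_ne hcne with h | h
      · have h' : ((w s).1 : ℕ) < ((w t).1 : ℕ) := h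
        exact Or.inl ⟨hwne' s, hwne' t, Or.inr ⟨hr.symm, h, fun i h1 h2 =>
          hmid i (by have g1 : ((w s).1:ℕ) < (i:ℕ) := h1; omega)
            (by have g2 : (i:ℕ) < ((w t).1:ℕ) := h2; omega)⟩⟩
      · have h' : ((w t).1 : ℕ) < ((w s).1 : ℕ) := h
        refine Or.inr ⟨hwne' t, hwne' s, Or.inr ⟨hr, h, fun i h1 h2 => ?_⟩⟩
        rw [hr]
        exact hmid i (by have g1 : ((w t).1:ℕ) < (i:ℕ) := h1; omega)
          (by have g2 : (i:ℕ) < ((w s).1:ℕ) := h2; omega)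
    · -- shared column
      have hr : (w t).1 = (w s).1 := hcol (f t.val) (le_of_lt hlt) le_rfl
      have hcne : (w s).2 ≠ (w t).2 := fun h => hwne (Prod.ext hr.symm h)
      have hmid : ∀ j : Fin ℓ, min ((w s).2 : ℕ) ((w t).2 : ℕ) < (j:ℕ) →
          (j:ℕ) < max ((w s).2 : ℕ) ((w t).2 : ℕ) → M' (w s).1 j = none := by
        intro j h1 h2
        by_contra hne2
        obtain ⟨t', ht'⟩ := (himg' ((w s).1, j)).1 hne2
        have hcol'' : (w t').1 = (w s).1 := by rw [ht']
        have hrow' : ((w t').2 : ℕ) = (j : ℕ) := by rw [ht']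
        have hts : t'.val ≠ s.val := by
          intro hh
          rw [Fin.ext hh] at hrow'
          omega
        have htt : t'.val ≠ t.val := by
          intro hh
          rw [Fin.ext hh] at hrow'
          omega
        have r1 := col3 s t' hcol''.symm
        have r2 := col3 t t' (hr.trans hcol''.symm)
        omega
      rcases lt_or_gt_of_ne hcne with h | h
      · have h' : ((w s).2 : ℕ) < ((w t).2 : ℕ) := h
        exact Or.inl ⟨hwne' s, hwne' t, Or.inl ⟨hr.symm, h, fun j h1 h2 =>
          hmid j (by have g1 : ((w s).2:ℕ) < (j:ℕ) := h1; omega)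
            (by have g2 : (j:ℕ) < ((w t).2:ℕ) := h2; omega)⟩⟩
      · have h' : ((w t).2 : ℕ) < ((w s).2 : ℕ) := h
        refine Or.inr ⟨hwne' t, hwne' s, Or.inl ⟨hr, h, fun j h1 h2 => ?_⟩⟩
        rw [hr]
        exact hmid j (by have g1 : ((w t).2:ℕ) < (j:ℕ) := h1; omega)
          (by have g2 : (j:ℕ) < ((w s).2:ℕ) := h2; omega)
  have hAdjM' : ∀ s t : Fin (len+1), (cellGraph M').Adj (w s) (w t) ↔
      (s.val + 1 = t.val ∨ t.val + 1 = s.val) := by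
    intro s t
    constructor
    · intro h
      have hne : w s ≠ w t := (cellGraph M').ne_of_adj h
      have hst : s.val ≠ t.val := by
        intro hh
        exact hne (by rw [Fin.ext hh])
      rcases adj_share h with hr | hc
      · have := row3 s t hr.symm
        omega
      · have := col3 s t hc.symm
        omega
    · intro h
      rcases h with h | h
      · exact hcons s t h
      · exact (hcons t s h).symm
  have hTriple : ∀ s t u : Fin (len+1), s ≠ t → t ≠ u → s ≠ u →
      ¬((w s).1 = (w t).1 ∧ (w t).1 = (w u).1) ∧
      ¬((w s).2 = (w t).2 ∧ (w t).2 = (w u).2) := by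
    intro s t u hst htu hsu
    have hst' : s.val ≠ t.val := fun h => hst (Fin.ext h)
    have htu' : t.val ≠ u.val := fun h => htu (Fin.ext h)
    have hsu' : s.val ≠ u.val := fun h => hsu (Fin.ext h)
    constructor
    · rintro ⟨h1, h2⟩
      have r1 := col3 s t h1
      have r2 := col3 t u h2
      have r3 := col3 s u (h1.trans h2)
      omega
    · rintro ⟨h1, h2⟩
      have r1 := row3 s t h1
      have r2 := row3 t u h2
      have r3 := row3 s u (h1.trans h2)
      omega
  exact ⟨M', hsubM, w, hwinj, himg', hAdjM', hTriple⟩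
end Extract


open Finset in
/-- If a class `C` has the long path property, then either `C` is the class of all
permutations, or `C` contains, for every `len`, a monotone grid subclass whose cell
graph is a proper-turning path of length `len`. -/
theorem lpp_all_or_properTurning (C : (n : ℕ) → Set (Equiv.Perm (Fin n))) (hC : LPP C) :
    (∀ n, ∀ π : Equiv.Perm (Fin n), π ∈ C n) ∨
    (∀ len : ℕ, ∃ (k ℓ : ℕ) (M : GMatrix k ℓ),
      (∀ n, GridClass M n ⊆ C n) ∧ CellGraphIsProperTurningPath M len) := by
  classical
  by_cases hA : ∀ n : ℕ, ∃ (k ℓ : ℕ) (M : GMatrix k ℓ),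
      (∀ m, GridClass M m ⊆ C m) ∧
      ((∃ j : Fin ℓ, ∃ x : Fin n → Fin k, StrictMono x ∧ ∀ t, M (x t) j ≠ none) ∨
       (∃ i : Fin k, ∃ y : Fin n → Fin ℓ, StrictMono y ∧ ∀ t, M i (y t) ≠ none))
  · left
    intro n π
    obtain ⟨k, ℓ, M, hsub, hcase⟩ := hA n
    rcases hcase with ⟨j, x, hx, hne⟩ | ⟨i, y, hy, hne⟩
    · exact hsub n (mem_gridClass_of_row M j x hx hne π)
    · exact hsub n (mem_gridClass_of_col M i y hy hne π)
  · right
    push_neg at hA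
    obtain ⟨n0, hn0⟩ := hA
    intro len
    set B : ℕ := max (n0 - 1) 2 with hBdef
    have hB : 2 ≤ B := le_max_right _ _
    obtain ⟨k, ℓ, M, hsub, hpath⟩ := hC (len * (B - 1))
    obtain ⟨v, hinj, himg, hadj⟩ := hpath
    obtain ⟨hnorow, hnocol⟩ := hn0 k ℓ M hsub
    have hrowB : ∀ j : Fin ℓ, #{i : Fin k | M i j ≠ none} ≤ B := by
      intro j
      by_contra hcard
      have hcard' : n0 ≤ #{i : Fin k | M i j ≠ none} := by omega
      obtain ⟨s, hs, hscard⟩ := Finset.exists_subset_card_eq hcard'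
      obtain ⟨t, ht⟩ := hnorow j (s.orderEmbOfFin hscard) (s.orderEmbOfFin hscard).strictMono
      have hmem := hs (s.orderEmbOfFin_mem hscard t)
      simp only [Finset.mem_filter, Finset.mem_univ, true_and] at hmem
      exact hmem ht
    have hcolB : ∀ i : Fin k, #{j : Fin ℓ | M i j ≠ none} ≤ B := by
      intro i
      by_contra hcard
      have hcard' : n0 ≤ #{j : Fin ℓ | M i j ≠ none} := by omega
      obtain ⟨s, hs, hscard⟩ := Finset.exists_subset_card_eq hcard'
      obtain ⟨t, ht⟩ := hnocol i (s.orderEmbOfFin hscard) (s.orderEmbOfFin hscard).strictMono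
      have hmem := hs (s.orderEmbOfFin_mem hscard t)
      simp only [Finset.mem_filter, Finset.mem_univ, true_and] at hmem
      exact hmem ht
    obtain ⟨M', hsubM', hPT⟩ := extract_proper M hB (le_refl _) hrowB hcolB v hinj himg hadj
    exact ⟨k, ℓ, M', fun n => (gridClass_mono M M' hsubM' n).trans (hsub n), hPT⟩
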